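/- arXiv:math-ph/0211043 — 2 statements merged into one kernel-verified Lean document; each statement's English description precedes it below -/
import Mathlib

section
/- Let Λ ⊂ ℂ be an additive subgroup, let U, V : ℂ → ℂ be potentials with U = conj(V), let (k₁, k₂) ∈ ℂ², and let ψ = (ψ₁, ψ₂) be a pair of ℝ-differentiable functions ℂ → ℂ satisfying the Dirac equation ∂ψ₂ + U·ψ₁ = 0, ∂̄ψ₁ = V·ψ₂, each component being a Floquet function with quasi-impulses (k₁, k₂) with respect to Λ. Then the pair ψ̂ = (conj∘ψ₂, −conj∘ψ₁) is ℝ-differentiable, satisfies the same Dirac equation ∂ψ̂₂ + U·ψ̂₁ = 0, ∂̄ψ̂₁ = V·ψ̂₂, and each of its components is a Floquet function with quasi-impulses (−conj(k₁), −conj(k₂)) with respect to Λ. -/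
/-- The Wirtinger derivative `∂f(z) = ½(D₁f(z) − i·Dᵢf(z))`. -/
noncomputable def wd (f : ℂ → ℂ) (z : ℂ) : ℂ :=
  (1 / 2) * (fderiv ℝ f z 1 - Complex.I * fderiv ℝ f z Complex.I)

/-- The conjugate Wirtinger derivative `∂̄f(z) = ½(D₁f(z) + i·Dᵢf(z))`. -/
noncomputable def wdbar (f : ℂ → ℂ) (z : ℂ) : ℂ :=
  (1 / 2) * (fderiv ℝ f z 1 + Complex.I * fderiv ℝ f z Complex.I)

/-- `ψ` is a Floquet function with quasi-impulses `(k₁, k₂)` with respect to `Λ`: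
`ψ(z + γ) = exp(2πi(Re γ·k₁ + Im γ·k₂))·ψ(z)` for all `γ ∈ Λ`, `z ∈ ℂ`. -/
def IsFloquet (Λ : AddSubgroup ℂ) (k₁ k₂ : ℂ) (ψ : ℂ → ℂ) : Prop :=
  ∀ γ ∈ Λ, ∀ z : ℂ,
    ψ (z + γ) = Complex.exp (2 * Real.pi * Complex.I * (γ.re * k₁ + γ.im * k₂)) * ψ z

lemma fderiv_conj_apply (f : ℂ → ℂ) (hf : Differentiable ℝ f) (z w : ℂ) :
    fderiv ℝ (fun x => starRingEnd ℂ (f x)) z w = starRingEnd ℂ (fderiv ℝ f z w) := by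
  have h := (Complex.conjCLE.hasFDerivAt.comp z (hf z).hasFDerivAt).fderiv
  have : fderiv ℝ (fun x => starRingEnd ℂ (f x)) z =
      (Complex.conjCLE : ℂ ≃L[ℝ] ℂ).toContinuousLinearMap.comp (fderiv ℝ f z) := by
    exact h
  rw [this]; rfl

lemma wd_conj (f : ℂ → ℂ) (hf : Differentiable ℝ f) (z : ℂ) :
    wd (fun x => starRingEnd ℂ (f x)) z = starRingEnd ℂ (wdbar f z) := by
  simp only [wd, wdbar, fderiv_conj_apply f hf, map_mul, map_add]
  simp [Complex.conj_I, map_ofNat]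
  ring

lemma wdbar_conj (f : ℂ → ℂ) (hf : Differentiable ℝ f) (z : ℂ) :
    wdbar (fun x => starRingEnd ℂ (f x)) z = starRingEnd ℂ (wd f z) := by
  simp only [wd, wdbar, fderiv_conj_apply f hf, map_mul, map_sub]
  simp [Complex.conj_I, map_ofNat]

lemma wd_neg (f : ℂ → ℂ) (z : ℂ) : wd (fun x => -f x) z = -wd f z := by
  simp only [wd, fderiv_neg]
  simp
  ring

/-- If `U = conj V` and `ψ = (ψ₁, ψ₂)` solves the Dirac equation
`∂ψ₂ + U·ψ₁ = 0`, `∂̄ψ₁ = V·ψ₂`, each component being a Floquet function with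
quasi-impulses `(k₁, k₂)`, then `ψ̂ = (conj ∘ ψ₂, −conj ∘ ψ₁)` is ℝ-differentiable,
solves the same Dirac equation, and its components are Floquet functions with
quasi-impulses `(−conj k₁, −conj k₂)`. -/
theorem dirac_floquet_antiinvolution
    (Λ : AddSubgroup ℂ) (U V : ℂ → ℂ)
    (hUV : ∀ z, U z = starRingEnd ℂ (V z))
    (k₁ k₂ : ℂ) (ψ₁ ψ₂ : ℂ → ℂ)
    (hψ₁ : Differentiable ℝ ψ₁) (hψ₂ : Differentiable ℝ ψ₂)
    (hDirac : ∀ z, wd ψ₂ z + U z * ψ₁ z = 0 ∧ wdbar ψ₁ z = V z * ψ₂ z)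
    (hF₁ : IsFloquet Λ k₁ k₂ ψ₁) (hF₂ : IsFloquet Λ k₁ k₂ ψ₂) :
    Differentiable ℝ (fun z => starRingEnd ℂ (ψ₂ z)) ∧
    Differentiable ℝ (fun z => -starRingEnd ℂ (ψ₁ z)) ∧
    (∀ z, wd (fun w => -starRingEnd ℂ (ψ₁ w)) z + U z * starRingEnd ℂ (ψ₂ z) = 0 ∧
      wdbar (fun w => starRingEnd ℂ (ψ₂ w)) z = V z * (-starRingEnd ℂ (ψ₁ z))) ∧
    IsFloquet Λ (-starRingEnd ℂ k₁) (-starRingEnd ℂ k₂) (fun z => starRingEnd ℂ (ψ₂ z)) ∧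
    IsFloquet Λ (-starRingEnd ℂ k₁) (-starRingEnd ℂ k₂) (fun z => -starRingEnd ℂ (ψ₁ z)) := by
  have hconj : Differentiable ℝ (fun z : ℂ => starRingEnd ℂ z) :=
    Complex.conjCLE.differentiable
  have hexp : ∀ γ : ℂ,
      Complex.exp (2 * Real.pi * Complex.I * (γ.re * (-starRingEnd ℂ k₁) + γ.im * (-starRingEnd ℂ k₂)))
        = starRingEnd ℂ (Complex.exp (2 * Real.pi * Complex.I * (γ.re * k₁ + γ.im * k₂))) := by
    intro γ
    rw [← Complex.exp_conj]
    congr 1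
    simp [Complex.conj_I, Complex.conj_ofReal, map_ofNat]
    ring
  refine ⟨hconj.comp hψ₂, (hconj.comp hψ₁).neg, ?_, ?_, ?_⟩
  · intro z
    obtain ⟨h1, h2⟩ := hDirac z
    constructor
    · rw [wd_neg, wd_conj ψ₁ hψ₁, h2, hUV z]
      simp [mul_comm]
    · rw [wdbar_conj ψ₂ hψ₂]
      have : wd ψ₂ z = -(U z * ψ₁ z) := by linear_combination h1
      rw [this, hUV z]
      simp [mul_comm]
  · intro γ hγ z
    simp only []
    rw [hF₂ γ hγ z, hexp γ]
    simp
  · intro γ hγ z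
    simp only []
    rw [hF₁ γ hγ z, hexp γ]
    simp
end

section
/- Let u : ℝ → ℂ, λ ∈ ℂ, and let ψ̃₁, ψ̃₂ : ℝ → ℂ be differentiable. Define U : ℂ → ℂ by U(z) = u(Re z) and ψⱼ : ℂ → ℂ by ψⱼ(z) = ψ̃ⱼ(Re z)·exp(λ·Im z) for j = 1, 2. Then ψ = (ψ₁, ψ₂) satisfies the Dirac equation ∂ψ₂ + U·ψ₁ = 0 and ∂̄ψ₁ = U·ψ₂ (potentials U = V) if and only if (ψ̃₁, ψ̃₂) satisfies the Zakharov–Shabat system ψ̃₂' + 2u·ψ̃₁ = iλ·ψ̃₂ and −ψ̃₁' + 2u·ψ̃₂ = iλ·ψ̃₁ on ℝ. -/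
lemma key_fderiv (ψt : ℝ → ℂ) (h : Differentiable ℝ ψt) (lam : ℂ) (z w : ℂ) :
    fderiv ℝ (fun z : ℂ => ψt z.re * Complex.exp (lam * z.im)) z w
      = ψt z.re * (w.im * (Complex.exp (lam * z.im) * lam))
        + Complex.exp (lam * z.im) * (w.re * deriv ψt z.re) := by
  have hc : HasFDerivAt (fun z : ℂ => ψt z.re)
      (((1 : ℝ →L[ℝ] ℝ).smulRight (deriv ψt z.re)).comp Complex.reCLM) z :=
    ((h z.re).hasDerivAt.hasFDerivAt).comp z Complex.reCLM.hasFDerivAt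
  have hexp : HasDerivAt (fun t : ℝ => Complex.exp (lam * t))
      (Complex.exp (lam * z.im) * (lam * 1)) z.im :=
    ((Complex.ofRealCLM.hasDerivAt.const_mul lam).cexp)
  have hd : HasFDerivAt (fun z : ℂ => Complex.exp (lam * z.im))
      (((1 : ℝ →L[ℝ] ℝ).smulRight (Complex.exp (lam * z.im) * (lam * 1))).comp Complex.imCLM) z :=
    (hexp.hasFDerivAt).comp z Complex.imCLM.hasFDerivAt
  have : fderiv ℝ (fun z : ℂ => ψt z.re * Complex.exp (lam * z.im)) z = _ := (hc.mul hd).fderiv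
  rw [this]
  simp [smul_eq_mul, mul_comm]

/-- With `U(z) = u(Re z)` and `ψⱼ(z) = ψ̃ⱼ(Re z)·exp(λ·Im z)`, the pair `(ψ₁, ψ₂)`
solves the Dirac equation `∂ψ₂ + U·ψ₁ = 0`, `∂̄ψ₁ = U·ψ₂` (potentials `U = V`) if and
only if `(ψ̃₁, ψ̃₂)` solves the Zakharov–Shabat system
`ψ̃₂' + 2u·ψ̃₁ = iλ·ψ̃₂`, `−ψ̃₁' + 2u·ψ̃₂ = iλ·ψ̃₁` on ℝ. -/
theorem dirac_reduces_to_zakharov_shabat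
    (u : ℝ → ℂ) (lam : ℂ) (ψt₁ ψt₂ : ℝ → ℂ)
    (h₁ : Differentiable ℝ ψt₁) (h₂ : Differentiable ℝ ψt₂)
    (U : ℂ → ℂ) (hU : ∀ z, U z = u z.re)
    (ψ₁ ψ₂ : ℂ → ℂ)
    (hψ₁ : ∀ z, ψ₁ z = ψt₁ z.re * Complex.exp (lam * z.im))
    (hψ₂ : ∀ z, ψ₂ z = ψt₂ z.re * Complex.exp (lam * z.im)) :
    (∀ z, wd ψ₂ z + U z * ψ₁ z = 0 ∧ wdbar ψ₁ z = U z * ψ₂ z) ↔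
    (∀ x : ℝ, deriv ψt₂ x + 2 * u x * ψt₁ x = Complex.I * lam * ψt₂ x ∧
      -deriv ψt₁ x + 2 * u x * ψt₂ x = Complex.I * lam * ψt₁ x) := by
  have e₁ : ψ₁ = fun z : ℂ => ψt₁ z.re * Complex.exp (lam * z.im) := funext hψ₁
  have e₂ : ψ₂ = fun z : ℂ => ψt₂ z.re * Complex.exp (lam * z.im) := funext hψ₂
  have hwd : ∀ z, wd ψ₂ z = (1/2) * ((deriv ψt₂ z.re - Complex.I * lam * ψt₂ z.re)
      * Complex.exp (lam * z.im)) := by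
    intro z
    rw [wd, e₂, key_fderiv ψt₂ h₂ lam z 1, key_fderiv ψt₂ h₂ lam z Complex.I]
    simp
    ring
  have hwdbar : ∀ z, wdbar ψ₁ z = (1/2) * ((deriv ψt₁ z.re + Complex.I * lam * ψt₁ z.re)
      * Complex.exp (lam * z.im)) := by
    intro z
    rw [wdbar, e₁, key_fderiv ψt₁ h₁ lam z 1, key_fderiv ψt₁ h₁ lam z Complex.I]
    simp
    ring
  constructor
  · intro H x
    obtain ⟨Ha, Hb⟩ := H (x : ℂ)
    rw [hwd, hU, hψ₁] at Ha
    rw [hwdbar, hU, hψ₂] at Hb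
    simp only [Complex.ofReal_re, Complex.ofReal_im] at Ha Hb
    have hne : Complex.exp (lam * (0:ℝ)) ≠ 0 := Complex.exp_ne_zero _
    constructor
    · have h' : (deriv ψt₂ x - Complex.I * lam * ψt₂ x + 2 * (u x * ψt₁ x))
          * Complex.exp (lam * (0:ℝ)) = 0 := by linear_combination 2 * Ha
      rcases mul_eq_zero.1 h' with h'' | h''
      · linear_combination h''
      · exact absurd h'' hne
    · have h' : (deriv ψt₁ x + Complex.I * lam * ψt₁ x - 2 * (u x * ψt₂ x))
          * Complex.exp (lam * (0:ℝ)) = 0 := by linear_combination 2 * Hb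
      rcases mul_eq_zero.1 h' with h'' | h''
      · linear_combination -h''
      · exact absurd h'' hne
  · intro H z
    obtain ⟨Ha, Hb⟩ := H z.re
    rw [hwd, hwdbar, hU, hψ₁, hψ₂]
    constructor
    · linear_combination (1/2) * Complex.exp (lam * z.im) * Ha
    · linear_combination (-1/2) * Complex.exp (lam * z.im) * Hb
end
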